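/- For every integer s ≥ 3481, 25·(n₄(s) − 4s − 3) ≤ 12·(s − 3), where n₄(s) = min{ n ≥ 4(s+1) : C(n,4) − C(n−s,4) ≥ C(4s+3,4) }. Equivalently, C(m,4) − C(m−s,4) ≥ C(4s+3,4) for m = ⌊(112s+39)/25⌋ whenever s ≥ 3481. -/
import Mathlib


/-- The 4-uniform transition value
`n₄(s) = min{ n ≥ 4(s+1) : C(n,4) − C(n−s,4) ≥ C(4s+3,4) }`. -/
noncomputable def n4 (s : ℕ) : ℕ :=
  sInf {n : ℕ | 4 * (s + 1) ≤ n ∧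
    Nat.choose (4 * s + 3) 4 + Nat.choose (n - s) 4 ≤ Nat.choose n 4}

/-- Key integer inequality: if `112s+15 ≤ 25m ≤ 112s+39` and `s ≥ 3481`, then the
descending-factorial form of the cover bound holds at `m`. -/
lemma key_int (s m : ℤ) (hs : 3481 ≤ s) (h1 : 112 * s + 15 ≤ 25 * m)
    (h2 : 25 * m ≤ 112 * s + 39) :
    (4 * s + 3) * (4 * s + 2) * (4 * s + 1) * (4 * s)
      + (m - s) * (m - s - 1) * (m - s - 2) * (m - s - 3)
      ≤ m * (m - 1) * (m - 2) * (m - 3) := by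
  rcases le_or_gt (112 * s + 16) (25 * m) with h | h
  · -- a = 25m − 112s ≥ 16 : valid for all s ≥ 3481
    have ht : (0:ℤ) ≤ s - 3481 := by omega
    have hb : (0:ℤ) ≤ 25 * m - 112 * s - 16 := by omega
    have hid : 390625 * (m * (m - 1) * (m - 2) * (m - 3)
        - ((4 * s + 3) * (4 * s + 2) * (4 * s + 1) * (4 * s)
          + (m - s) * (m - s - 1) * (m - s - 2) * (m - s - 3)))
        = 93666302074153200 + 125922866263996700 * (25*m - 112*s - 16) + 361680773400 * (25*m - 112*s - 16)^2 + 348100 * (25*m - 112*s - 16)^3 + 2703516658881350 * (s - 3481) + 108527478198550 * (s - 3481) * (25*m - 112*s - 16) + 207809250 * (s - 3481) * (25*m - 112*s - 16)^2 + 100 * (s - 3481) * (25*m - 112*s - 16)^3 + 2283505996125 * (s - 3481)^2 + 31178381550 * (s - 3481)^2 * (25*m - 112*s - 16) + 29850 * (s - 3481)^2 * (25*m - 112*s - 16)^2 + 651532150 * (s - 3481)^3 + 2985700 * (s - 3481)^3 * (25*m - 112*s - 16) + 62175 * (s - 3481)^4 := by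
      ring
    nlinarith [hid, ht, hb, mul_nonneg ht hb, pow_nonneg hb 2, pow_nonneg hb 3,
      mul_nonneg ht (pow_nonneg hb 2), mul_nonneg ht (pow_nonneg hb 3),
      pow_nonneg ht 2, mul_nonneg (pow_nonneg ht 2) hb,
      mul_nonneg (pow_nonneg ht 2) (pow_nonneg hb 2),
      pow_nonneg ht 3, mul_nonneg (pow_nonneg ht 3) hb, pow_nonneg ht 4]
  · -- a = 15 : forces s ≡ 5 (mod 25), hence s ≥ 3505
    have ha : 25 * m = 112 * s + 15 := by omega
    have hs' : (3505:ℤ) ≤ s := by omega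
    have ht : (0:ℤ) ≤ s - 3505 := by omega
    have hid : 390625 * (m * (m - 1) * (m - 2) * (m - 3)
        - ((4 * s + 3) * (4 * s + 2) * (4 * s + 1) * (4 * s)
          + (m - s) * (m - s - 1) * (m - s - 2) * (m - s - 3)))
        = 31329869671875000 + 2704225241718750 * (s - 3505) + 2299237865625 * (s - 3505)^2 + 654515250 * (s - 3505)^3 + 62175 * (s - 3505)^4 := by
      linear_combination ((2985700*s^3 - 2238750*s^2 + 343750*s)
        + (29850*s^2 - 11250*s)*((25*m-112*s) + 15)
        + (100*s)*((25*m-112*s)^2 + 15*(25*m-112*s) + 225)) * ha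
    nlinarith [hid, ht, pow_nonneg ht 2, pow_nonneg ht 3, pow_nonneg ht 4]

/-- Natural-number form of the key inequality. -/
lemma key_nat (s m : ℕ) (hs : 3481 ≤ s) (h1 : 112 * s + 15 ≤ 25 * m)
    (h2 : 25 * m ≤ 112 * s + 39) :
    Nat.choose (4 * s + 3) 4 + Nat.choose (m - s) 4 ≤ Nat.choose m 4 := by
  have hms : s ≤ m := by omega
  have h24 : ∀ n : ℕ, 24 * Nat.choose n 4 = Nat.descFactorial n 4 := by
    intro n
    rw [Nat.descFactorial_eq_factorial_mul_choose]
    norm_num [Nat.factorial]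
  have goal24 : 24 * Nat.choose (4 * s + 3) 4 + 24 * Nat.choose (m - s) 4
      ≤ 24 * Nat.choose m 4 → Nat.choose (4 * s + 3) 4 + Nat.choose (m - s) 4
      ≤ Nat.choose m 4 := by omega
  apply goal24
  rw [h24, h24, h24]
  have hd : ∀ n : ℕ, 3 ≤ n → (Nat.descFactorial n 4 : ℤ)
      = (n : ℤ) * ((n : ℤ) - 1) * ((n : ℤ) - 2) * ((n : ℤ) - 3) := by
    intro n hn
    simp only [Nat.descFactorial, Nat.sub_zero, Nat.mul_one]
    push_cast [Nat.cast_sub (by omega : 1 ≤ n), Nat.cast_sub (by omega : 2 ≤ n),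
      Nat.cast_sub hn]
    ring
  have key := key_int (s : ℤ) (m : ℤ) (by exact_mod_cast hs)
    (by exact_mod_cast h1) (by exact_mod_cast h2)
  zify
  rw [hd (4 * s + 3) (by omega), hd (m - s) (by omega), hd m (by omega)]
  push_cast [Nat.cast_sub hms]
  nlinarith [key]

/-- For every `s ≥ 3481`, `25(n₄(s) − 4s − 3) ≤ 12(s − 3)`; equivalently, the cover bound
already reaches the clique bound at `m = ⌊(112s+39)/25⌋`. -/
theorem stmt14 (s : ℕ) (hs : 3481 ≤ s) :
    25 * (n4 s - (4 * s + 3)) ≤ 12 * (s - 3) ∧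
    Nat.choose (4 * s + 3) 4 + Nat.choose ((112 * s + 39) / 25 - s) 4
      ≤ Nat.choose ((112 * s + 39) / 25) 4 := by
  set m := (112 * s + 39) / 25 with hm
  have h1 : 25 * m ≤ 112 * s + 39 := by omega
  have h2 : 112 * s + 39 < 25 * m + 25 := by omega
  have hkey := key_nat s m hs (by omega) h1
  have hmem : m ∈ {n : ℕ | 4 * (s + 1) ≤ n ∧
      Nat.choose (4 * s + 3) 4 + Nat.choose (n - s) 4 ≤ Nat.choose n 4} :=
    ⟨by omega, hkey⟩
  have hle : n4 s ≤ m := Nat.sInf_le hmem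
  exact ⟨by omega, hkey⟩
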